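/- Let 0 < α < 1 and γ > 0. For each m ∈ ℕ there exists a constant C > 0 such that for all integers j ≥ 1: |(1−α)^γ F_j − ∑_{k=0}^{m} t_k j^{−k}| ≤ C j^{−m−1}; that is, (1−α)^γ F_j admits the asymptotic expansion ∑_{k≥0} t_k j^{−k} as j → ∞, with coefficients t_k. -/

import Mathlib

/-- Pochhammer symbol `(γ)_l = γ(γ+1)⋯(γ+l−1)`. -/
noncomputable def poch (γ : ℝ) (l : ℕ) : ℝ := ∏ i ∈ Finset.range l, (γ + i)

/-- `F_j(α,γ) = ∑_{l≥0} α^l (γ)_l/l! · jγ/(jγ+l)`, with the `l = 0` summand interpreted as `1`. -/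
noncomputable def Fseq (α γ : ℝ) (j : ℕ) : ℝ :=
  ∑' l : ℕ, if l = 0 then 1 else
    α^l * poch γ l / (Nat.factorial l) * ((j*γ)/(j*γ + l))

/-- Stirling numbers of the second kind. -/
def stirling2 : ℕ → ℕ → ℕ
  | 0, 0 => 1
  | 0, _+1 => 0
  | _+1, 0 => 0
  | n+1, k+1 => (k+1) * stirling2 n (k+1) + stirling2 n k

/-- `t_n(α,γ) = (−1)^n γ^{−n} ∑_{i=0}^n S(n,i) (γ)_i (α/(1−α))^i`. -/
noncomputable def tcoef (α γ : ℝ) (n : ℕ) : ℝ :=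
  (-1)^n * (γ^n)⁻¹ *
    ∑ i ∈ Finset.range (n+1), (stirling2 n i : ℝ) * poch γ i * (α/(1-α))^i

/-- Sum of products `f_{l_s}⋯f_{l_1}` over strictly decreasing integer sequences
`m ≥ l_s > ⋯ > l_1 ≥ 1` with `l_1+⋯+l_s = k` (realized as subsets of `{1,…,m}` with sum `k`). -/
noncomputable def ppSum (f : ℕ → ℝ) (m k : ℕ) : ℝ :=
  ∑ S ∈ (Finset.Icc 1 m).powerset.filter (fun S => S.sum id = k), ∏ l ∈ S, f l


section AuxAsymFj

open Finset Filter Topology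

lemma poch_zero (c : ℝ) : poch c 0 = 1 := by simp [poch]

lemma poch_succ (c : ℝ) (l : ℕ) : poch c (l+1) = poch c l * (c + l) :=
  Finset.prod_range_succ _ _

lemma poch_pos {c : ℝ} (hc : 0 < c) (l : ℕ) : 0 < poch c l :=
  Finset.prod_pos (fun i _ => by positivity)

lemma poch_add (c : ℝ) (i l : ℕ) : poch c (i + l) = poch c i * poch (c + i) l := by
  rw [poch, poch, poch, Finset.prod_range_add]
  congr 1
  refine Finset.prod_congr rfl fun t _ => ?_
  push_cast; ring

lemma tendsto_aux (c : ℝ) : Tendsto (fun l : ℕ => (c + l) / ((l:ℝ) + 1)) atTop (𝓝 1) := by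
  have key : Tendsto (fun l : ℕ => 1 / ((l:ℝ) + 1)) atTop (𝓝 0) :=
    tendsto_one_div_add_atTop_nhds_zero_nat
  have h := (key.const_mul (c - 1)).const_add 1
  simp only [mul_zero, add_zero] at h
  refine h.congr fun l => ?_
  have : ((l:ℝ) + 1) ≠ 0 := by positivity
  field_simp
  ring

lemma summable_master {x c : ℝ} (hx0 : 0 < x) (hx1 : x < 1) (hc : 0 < c) (k : ℕ) :
    Summable (fun l : ℕ => x^l * poch c l / l.factorial * ((l:ℝ)+1)^k) := by
  have hpos : ∀ l : ℕ, 0 < x^l * poch c l / l.factorial * ((l:ℝ)+1)^k := fun l => by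
    have := poch_pos hc l
    have : (0:ℝ) < l.factorial := by exact_mod_cast l.factorial_pos
    positivity
  apply summable_of_ratio_test_tendsto_lt_one hx1
  · filter_upwards with l; exact (hpos l).ne'
  · have h1 : Tendsto (fun l : ℕ => x * ((c + l) / ((l:ℝ) + 1)) * (((l:ℝ)+2)/((l:ℝ)+1))^k)
        atTop (𝓝 (x * 1 * 1^k)) := by
      have h2 : Tendsto (fun l : ℕ => ((l:ℝ)+2)/((l:ℝ)+1)) atTop (𝓝 1) := by
        have := tendsto_aux 2
        refine this.congr fun l => by ring_nf
      exact (tendsto_const_nhds.mul (tendsto_aux c)).mul (h2.pow k)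
    simp only [mul_one, one_pow] at h1
    refine h1.congr fun l => ?_
    have hf : (0:ℝ) < l.factorial := by exact_mod_cast l.factorial_pos
    have hp := poch_pos hc l
    have hl1 : ((l:ℝ)+1) ≠ 0 := by positivity
    rw [Real.norm_eq_abs, Real.norm_eq_abs, abs_of_pos (hpos (l+1)), abs_of_pos (hpos l)]
    rw [poch_succ, pow_succ, Nat.factorial_succ]
    push_cast
    field_simp
    rw [← mul_pow]; congr 1; field_simp; ring

lemma summable_abs_le {f g : ℕ → ℝ} (hg : Summable g) (h : ∀ l, |f l| ≤ g l) : Summable f :=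
  (Summable.of_nonneg_of_le (fun l => abs_nonneg _) h hg).of_abs

lemma binomial_tsum {x c : ℝ} (hx0 : 0 < x) (hx1 : x < 1) (hc : 0 < c) :
    ∑' l : ℕ, x^l * poch c l / l.factorial = (1-x)^(-c) := by
  set r : ℝ := (1+x)/2 with hr
  have hr0 : 0 < r := by positivity
  have hr1 : r < 1 := by simp only [hr]; linarith
  have hxr : x < r := by simp only [hr]; linarith
  set f : ℝ → ℝ := fun y => ∑' l : ℕ, poch c l / l.factorial * y^l with hf
  set s : Set ℝ := Set.Ioo (-r) r with hs
  set u : ℕ → ℝ := fun l => poch c l / l.factorial * l * r^(l-1) with hu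
  have hfac : ∀ l : ℕ, (0:ℝ) < l.factorial := fun l => by exact_mod_cast l.factorial_pos
  have hu_sum : Summable u := by
    refine summable_abs_le (((summable_master hr0 hr1 hc 1).mul_left (1/r))) fun l => ?_
    have hp := poch_pos hc l
    have hfl := hfac l
    rw [abs_of_nonneg (by positivity)]
    simp only [hu]
    rcases Nat.eq_zero_or_pos l with h0 | h0
    · subst h0
      simp only [hu, Nat.cast_zero, mul_zero, zero_mul]
      have := poch_pos hc 0
      positivity
    · have hstep : r^(l-1) * r = r^l := by
        rw [← pow_succ]; congr 1; omega
      have hll : (l:ℝ) ≤ (l:ℝ)+1 := by linarith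
      have heq : poch c l / l.factorial * l * r^(l-1)
          = (1/r) * (r^l * poch c l / l.factorial * (l:ℝ)) := by
        rw [← hstep]; field_simp
      rw [heq]
      have h2 : r^l * poch c l / l.factorial * (l:ℝ) ≤ r^l * poch c l / l.factorial * ((l:ℝ)+1) :=
        mul_le_mul_of_nonneg_left hll (by positivity)
      calc (1/r) * (r^l * poch c l / l.factorial * (l:ℝ))
          ≤ (1/r) * (r^l * poch c l / l.factorial * ((l:ℝ)+1)) :=
            mul_le_mul_of_nonneg_left h2 (by positivity)
        _ = 1/r * (r ^ l * poch c l / ↑l.factorial * ((l:ℝ) + 1) ^ 1) := by rw [pow_one]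
  have hderiv : ∀ (l : ℕ) (y : ℝ), y ∈ s →
      HasDerivAt (fun y : ℝ => poch c l / l.factorial * y^l)
        (poch c l / l.factorial * (l * y^(l-1))) y :=
    fun l y _ => (hasDerivAt_pow l y).const_mul _
  have hbound : ∀ (l : ℕ) (y : ℝ), y ∈ s →
      ‖poch c l / l.factorial * (l * y^(l-1))‖ ≤ u l := by
    intro l y hy
    have hp := poch_pos hc l
    have hfl := hfac l
    have hyr : |y| ≤ r := le_of_lt (abs_lt.2 ⟨hy.1, hy.2⟩)
    rw [Real.norm_eq_abs, abs_mul, abs_mul,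
      abs_of_nonneg (by positivity : (0:ℝ) ≤ poch c l / l.factorial),
      abs_of_nonneg (Nat.cast_nonneg l), abs_pow]
    have hyp : |y|^(l-1) ≤ r^(l-1) := pow_le_pow_left₀ (abs_nonneg y) hyr _
    calc poch c l / l.factorial * ((l:ℝ) * |y|^(l-1))
        ≤ poch c l / l.factorial * ((l:ℝ) * r^(l-1)) := by
          apply mul_le_mul_of_nonneg_left _ (by positivity)
          exact mul_le_mul_of_nonneg_left hyp (Nat.cast_nonneg l)
      _ = poch c l / l.factorial * l * r^(l-1) := by ring
  have h0s : (0:ℝ) ∈ s := ⟨by linarith, hr0⟩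
  have hf0 : Summable fun l : ℕ => poch c l / l.factorial * (0:ℝ)^l := by
    apply summable_of_ne_finset_zero (s := {0})
    intro l hl
    simp only [Finset.mem_singleton] at hl
    rw [zero_pow hl, mul_zero]
  have hF : ∀ y ∈ s, HasDerivAt f (∑' l : ℕ, poch c l / l.factorial * (l * y^(l-1))) y :=
    fun y hy => hasDerivAt_tsum_of_isPreconnected hu_sum isOpen_Ioo
      (convex_Ioo _ _).isPreconnected hderiv hbound h0s hf0 hy
  have hODE : ∀ y ∈ s, (1-y) * (∑' l : ℕ, poch c l / l.factorial * (l * y^(l-1))) = c * f y := by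
    intro y hy
    have hyabs : |y| < r := abs_lt.2 ⟨hy.1, hy.2⟩
    have habs : ∀ l : ℕ, |poch c l / l.factorial * y^l| ≤ poch c l / l.factorial * r^l := by
      intro l
      have hp := poch_pos hc l
      have hfl := hfac l
      rw [abs_mul, abs_of_nonneg (by positivity : (0:ℝ) ≤ poch c l / l.factorial), abs_pow]
      exact mul_le_mul_of_nonneg_left (pow_le_pow_left₀ (abs_nonneg y) hyabs.le _) (by positivity)
    set e : ℕ → ℝ := fun l => poch c l / l.factorial * y^l with he
    have hse : Summable e := by
      refine summable_abs_le (g := fun l => poch c l / l.factorial * r^l) ?_ habs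
      refine ((summable_master hr0 hr1 hc 0).mul_left 1).congr fun l => by ring
    have hs1 : Summable fun l : ℕ => (c + l) * e l := by
      refine summable_abs_le ((summable_master hr0 hr1 hc 1).mul_left (c+1)) fun l => ?_
      rw [abs_mul, abs_of_nonneg (by positivity : (0:ℝ) ≤ c + (l:ℝ))]
      calc (c + (l:ℝ)) * |e l| ≤ ((c+1)*((l:ℝ)+1)) * (poch c l / l.factorial * r^l) := by
            apply mul_le_mul (by nlinarith [Nat.cast_nonneg (α := ℝ) l]) (habs l) (abs_nonneg _)
              (by positivity)
        _ = (c+1) * (r^l * poch c l / l.factorial * ((l:ℝ)+1)^1) := by ring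
    have hs2 : Summable fun l : ℕ => (l:ℝ) * e l := by
      refine summable_abs_le ((summable_master hr0 hr1 hc 1).mul_left 1) fun l => ?_
      rw [abs_mul, abs_of_nonneg (Nat.cast_nonneg l)]
      calc (l:ℝ) * |e l| ≤ ((l:ℝ)+1) * (poch c l / l.factorial * r^l) :=
            mul_le_mul (by linarith) (habs l) (abs_nonneg _) (by positivity)
        _ = 1 * (r^l * poch c l / l.factorial * ((l:ℝ)+1)^1) := by ring
    have hsD : Summable fun l : ℕ => poch c l / l.factorial * ((l:ℝ) * y^(l-1)) :=
      summable_abs_le hu_sum (fun l => by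
        have := hbound l y hy; rwa [Real.norm_eq_abs] at this)
    have hD1 : (∑' l : ℕ, poch c l / l.factorial * (l * y^(l-1))) = ∑' l : ℕ, (c + l) * e l := by
      rw [Summable.tsum_eq_zero_add hsD]
      simp only [Nat.cast_zero, zero_mul, mul_zero, zero_add]
      refine tsum_congr fun l => ?_
      have hfl := hfac l
      have hl1 : ((l:ℝ)+1) ≠ 0 := by positivity
      rw [poch_succ, Nat.factorial_succ, Nat.add_sub_cancel]
      simp only [he]
      push_cast
      field_simp
    have hD2 : y * (∑' l : ℕ, (c + l) * e l) = ∑' l : ℕ, (l:ℝ) * e l := by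
      rw [← tsum_mul_left, Summable.tsum_eq_zero_add hs2]
      simp only [Nat.cast_zero, zero_mul, zero_add]
      refine (tsum_congr fun l => ?_)
      have hfl := hfac l
      have hl1 : ((l:ℝ)+1) ≠ 0 := by positivity
      simp only [he]
      rw [poch_succ, Nat.factorial_succ]
      push_cast
      rw [pow_succ]
      field_simp
    rw [hD1, sub_mul, one_mul, hD2, ← Summable.tsum_sub hs1 hs2]
    have : f y = ∑' l, e l := rfl
    rw [this, ← tsum_mul_left]
    exact tsum_congr fun l => by ring
  set g : ℝ → ℝ := fun y => f y * (1-y)^c with hg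
  have hgd : ∀ y, 0 ≤ y → y ≤ x → HasDerivAt g 0 y := by
    intro y hy0 hyx
    have hys : y ∈ s := ⟨by linarith, by linarith⟩
    have h1y : 0 < 1 - y := by linarith
    have hDy := hF y hys
    have hin : HasDerivAt (fun t : ℝ => 1 - t) (-1) y := by
      simpa using (hasDerivAt_id y).const_sub 1
    have hrpow : HasDerivAt (fun t : ℝ => (1-t)^c) (c * (1-y)^(c-1) * (-1)) y :=
      (Real.hasDerivAt_rpow_const (x := 1-y) (p := c) (Or.inl h1y.ne')).comp y hin
    have hprod := hDy.mul hrpow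
    have hODEy := hODE y hys
    have hsplit : (1-y)^c = (1-y) * (1-y)^(c-1) := by
      nth_rewrite 2 [show (1:ℝ)-y = (1-y)^(1:ℝ) from (Real.rpow_one _).symm]
      rw [← Real.rpow_add h1y]
      norm_num
    have hzero : (∑' l : ℕ, poch c l / l.factorial * (l * y^(l-1))) * (1-y)^c
        + f y * (c * (1-y)^(c-1) * (-1)) = 0 := by
      rw [hsplit]
      linear_combination ((1-y)^(c-1)) * hODEy
    rw [show (0:ℝ) = (∑' l : ℕ, poch c l / l.factorial * (l * y^(l-1))) * (1-y)^c
        + f y * (c * (1-y)^(c-1) * (-1)) from hzero.symm]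
    exact hprod
  have hcont : ContinuousOn g (Set.Icc 0 x) := fun y hy =>
    ((hgd y hy.1 hy.2).continuousAt).continuousWithinAt
  have hconst := constant_of_has_deriv_right_zero hcont
    (fun y hy => (hgd y hy.1 hy.2.le).hasDerivWithinAt) x (Set.right_mem_Icc.2 hx0.le)
  have hf0val : f 0 = 1 := by
    have : f 0 = ∑' l : ℕ, poch c l / l.factorial * (0:ℝ)^l := rfl
    rw [this, tsum_eq_single 0 (fun l hl => by rw [zero_pow hl, mul_zero])]
    simp [poch_zero]
  have hg0 : g 0 = 1 := by
    simp only [hg, hf0val, sub_zero, Real.one_rpow, one_mul]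
  have h1x : 0 < 1 - x := by linarith
  have hfx : f x * (1-x)^c = 1 := by
    have : g x = f x * (1-x)^c := rfl
    rw [← this, hconst, hg0]
  have : f x = (1-x)^(-c) := by
    rw [Real.rpow_neg h1x.le]
    exact eq_inv_of_mul_eq_one_left hfx
  rw [← this]
  exact tsum_congr fun l => by ring

lemma stirling2_eq_zero : ∀ {n k : ℕ}, n < k → stirling2 n k = 0
  | 0, k+1, _ => rfl
  | n+1, k+1, h => by
      have h1 : n < k+1 := by omega
      have h2 : n < k := by omega
      simp [stirling2, stirling2_eq_zero h1, stirling2_eq_zero h2]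

lemma cast_mul_descFactorial (l i : ℕ) :
    (l:ℝ) * (l.descFactorial i) = (l.descFactorial (i+1) : ℝ) + i * (l.descFactorial i) := by
  rcases le_or_gt i l with h | h
  · rw [Nat.descFactorial_succ]
    push_cast [Nat.cast_sub h]
    ring
  · rw [Nat.descFactorial_eq_zero_iff_lt.2 h, Nat.descFactorial_eq_zero_iff_lt.2 (by omega)]
    simp

lemma pow_eq_sum_stirling (k : ℕ) : ∀ l : ℕ,
    (l:ℝ)^k = ∑ i ∈ Finset.range (k+1), (stirling2 k i : ℝ) * (l.descFactorial i : ℝ) := by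
  induction k with
  | zero => intro l; simp [stirling2]
  | succ k ih =>
    intro l
    have : (l:ℝ)^(k+1) = ∑ i ∈ Finset.range (k+1), (stirling2 k i : ℝ)
        * ((l.descFactorial (i+1) : ℝ) + i * (l.descFactorial i)) := by
      rw [pow_succ, ih l, Finset.sum_mul]
      refine Finset.sum_congr rfl fun i _ => ?_
      rw [mul_comm _ (l:ℝ), mul_comm, mul_assoc, ← cast_mul_descFactorial l i]
      ring
    rw [this]
    have hz : (stirling2 (k+1) 0 : ℝ) * (l.descFactorial 0 : ℝ) = 0 := by
      simp [stirling2]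
    have hrec : ∀ i, (stirling2 (k+1) (i+1) : ℝ) = (i+1) * stirling2 k (i+1) + stirling2 k i := by
      intro i; push_cast [stirling2]; ring
    have hshift : ∑ i ∈ Finset.range (k+1),
          (((i+1:ℕ)):ℝ) * stirling2 k (i+1) * (l.descFactorial (i+1):ℝ)
        = ∑ i ∈ Finset.range (k+1), (i:ℝ) * stirling2 k i * (l.descFactorial i : ℝ) := by
      have h1 := Finset.sum_range_succ'
        (fun i => (i:ℝ) * stirling2 k i * (l.descFactorial i:ℝ)) (k+1)
      have h2 := Finset.sum_range_succ
        (fun i => (i:ℝ) * stirling2 k i * (l.descFactorial i:ℝ)) (k+1)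
      have hz2 : (((k+1:ℕ)):ℝ) * stirling2 k (k+1) * (l.descFactorial (k+1):ℝ) = 0 := by
        rw [stirling2_eq_zero (Nat.lt_succ_self k)]; simp
      rw [h2] at h1
      simp only [hz2, Nat.cast_zero, zero_mul, add_zero] at h1
      linarith [h1]
    calc ∑ i ∈ Finset.range (k+1), (stirling2 k i:ℝ)
            * ((l.descFactorial (i+1):ℝ) + i * (l.descFactorial i))
        = (∑ i ∈ Finset.range (k+1), (((i+1:ℕ)):ℝ) * stirling2 k (i+1) * (l.descFactorial (i+1):ℝ))
          + ∑ i ∈ Finset.range (k+1), (stirling2 k i:ℝ) * (l.descFactorial (i+1):ℝ) := by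
          rw [hshift, ← Finset.sum_add_distrib]
          exact Finset.sum_congr rfl fun i _ => by push_cast; ring
      _ = ∑ i ∈ Finset.range (k+1),
            ((((i:ℝ)+1) * stirling2 k (i+1) + stirling2 k i) * (l.descFactorial (i+1):ℝ)) := by
          rw [← Finset.sum_add_distrib]
          exact Finset.sum_congr rfl fun i _ => by push_cast; ring
      _ = ∑ i ∈ Finset.range (k+1), (stirling2 (k+1) (i+1):ℝ) * (l.descFactorial (i+1):ℝ) :=
          Finset.sum_congr rfl fun i _ => by rw [hrec i]
      _ = ∑ i ∈ Finset.range (k+1+1), (stirling2 (k+1) i:ℝ) * (l.descFactorial i:ℝ) := by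
          rw [Finset.sum_range_succ'
            (fun i => (stirling2 (k+1) i:ℝ) * (l.descFactorial i:ℝ)) (k+1), hz, add_zero]

lemma summable_weight {x c : ℝ} (hx0 : 0 < x) (hx1 : x < 1) (hc : 0 < c) (k : ℕ)
    {A : ℝ} (w : ℕ → ℝ) (hw : ∀ l, |w l| ≤ A * ((l:ℝ)+1)^k) :
    Summable (fun l : ℕ => x^l * poch c l / l.factorial * w l) := by
  refine summable_abs_le ((summable_master hx0 hx1 hc k).mul_left A) fun l => ?_
  have hf : (0:ℝ) < l.factorial := by exact_mod_cast l.factorial_pos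
  have hp := poch_pos hc l
  have h0 : (0:ℝ) ≤ x^l * poch c l / l.factorial := by positivity
  rw [abs_mul, abs_of_nonneg h0]
  calc x^l * poch c l / l.factorial * |w l| ≤ x^l * poch c l / l.factorial * (A * ((l:ℝ)+1)^k) :=
        mul_le_mul_of_nonneg_left (hw l) h0
    _ = A * (x^l * poch c l / l.factorial * ((l:ℝ)+1)^k) := by ring

lemma desc_weight_bound (i : ℕ) : ∀ l : ℕ, |((l.descFactorial i : ℕ) : ℝ)| ≤ 1 * ((l:ℝ)+1)^i := by
  intro l
  rw [abs_of_nonneg (Nat.cast_nonneg _), one_mul]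
  calc ((l.descFactorial i : ℕ) : ℝ) ≤ ((l^i : ℕ) : ℝ) := by
        exact_mod_cast Nat.descFactorial_le_pow l i
    _ = (l:ℝ)^i := by push_cast; ring
    _ ≤ ((l:ℝ)+1)^i := pow_le_pow_left₀ (Nat.cast_nonneg l) (by linarith) i

lemma summable_desc {α γ : ℝ} (hα0 : 0 < α) (hα1 : α < 1) (hγ : 0 < γ) (i : ℕ) :
    Summable (fun l : ℕ => α^l * poch γ l / l.factorial * ((l.descFactorial i : ℕ) : ℝ)) :=
  summable_weight hα0 hα1 hγ i _ (desc_weight_bound i)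

lemma desc_tsum {α γ : ℝ} (hα0 : 0 < α) (hα1 : α < 1) (hγ : 0 < γ) (i : ℕ) :
    ∑' l : ℕ, α^l * poch γ l / l.factorial * ((l.descFactorial i : ℕ) : ℝ)
      = α^i * poch γ i * (1-α)^(-(γ+(i:ℝ))) := by
  have hsum := summable_desc hα0 hα1 hγ i
  rw [← Summable.sum_add_tsum_nat_add i hsum]
  have hz : ∑ l ∈ Finset.range i, α^l * poch γ l / l.factorial * ((l.descFactorial i : ℕ) : ℝ)
      = 0 := by
    refine Finset.sum_eq_zero fun l hl => ?_
    rw [Nat.descFactorial_eq_zero_iff_lt.2 (Finset.mem_range.1 hl)]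
    simp
  rw [hz, zero_add]
  have key : ∀ l : ℕ, α^(l+i) * poch γ (l+i) / ((l+i).factorial : ℝ)
        * (((l+i).descFactorial i : ℕ):ℝ)
      = (α^i * poch γ i) * (α^l * poch (γ+i) l / l.factorial) := by
    intro l
    have hNat := Nat.factorial_mul_descFactorial (Nat.le_add_left i l)
    rw [Nat.add_sub_cancel] at hNat
    have hcast : (l.factorial : ℝ) * (((l+i).descFactorial i : ℕ) : ℝ) = ((l+i).factorial : ℝ) := by
      exact_mod_cast hNat
    have hpoch : poch γ (l+i) = poch γ i * poch (γ+i) l := by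
      rw [add_comm]; exact poch_add γ i l
    have h1 : ((l.factorial : ℕ):ℝ) ≠ 0 := by
      have : (0:ℝ) < l.factorial := by exact_mod_cast l.factorial_pos
      linarith
    have h2 : (((l+i).factorial : ℕ):ℝ) ≠ 0 := by
      have : (0:ℝ) < (l+i).factorial := by exact_mod_cast (l+i).factorial_pos
      linarith
    rw [pow_add, hpoch]
    field_simp
    linear_combination (poch γ i * poch (γ+i) l) * hcast
  rw [tsum_congr key, tsum_mul_left, binomial_tsum hα0 hα1 (by positivity : (0:ℝ) < γ + i)]

lemma moment {α γ : ℝ} (hα0 : 0 < α) (hα1 : α < 1) (hγ : 0 < γ) (k : ℕ) :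
    (1-α)^γ * ∑' l : ℕ, α^l * poch γ l / l.factorial * ((l:ℝ))^k
      = ∑ i ∈ Finset.range (k+1), (stirling2 k i : ℝ) * poch γ i * (α/(1-α))^i := by
  have h1α : (0:ℝ) < 1 - α := by linarith
  have h1 : (∑' l : ℕ, α^l * poch γ l / l.factorial * ((l:ℝ))^k)
      = ∑' l : ℕ, ∑ i ∈ Finset.range (k+1),
          (stirling2 k i : ℝ) * (α^l * poch γ l / l.factorial * ((l.descFactorial i : ℕ) : ℝ)) := by
    refine tsum_congr fun l => ?_
    rw [pow_eq_sum_stirling k l, Finset.mul_sum]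
    exact Finset.sum_congr rfl fun i _ => by ring
  rw [h1, Summable.tsum_finsetSum (fun i _ => (summable_desc hα0 hα1 hγ i).mul_left _), Finset.mul_sum]
  refine Finset.sum_congr rfl fun i _ => ?_
  rw [tsum_mul_left, desc_tsum hα0 hα1 hγ i]
  have hpow : (1-α)^γ * (1-α)^(-(γ+(i:ℝ))) = ((1-α)^i)⁻¹ := by
    rw [← Real.rpow_add h1α]
    have : γ + -(γ+(i:ℝ)) = -(i:ℝ) := by ring
    rw [this, Real.rpow_neg h1α.le, Real.rpow_natCast]
  calc (1-α)^γ * ((stirling2 k i : ℝ) * (α^i * poch γ i * (1-α)^(-(γ+(i:ℝ)))))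
      = ((stirling2 k i : ℝ) * poch γ i * α^i) * ((1-α)^γ * (1-α)^(-(γ+(i:ℝ)))) := by ring
    _ = ((stirling2 k i : ℝ) * poch γ i * α^i) * ((1-α)^i)⁻¹ := by rw [hpow]
    _ = (stirling2 k i : ℝ) * poch γ i * (α/(1-α))^i := by rw [div_pow]; ring

end AuxAsymFj

open Finset Filter Topology

/-- Let `0 < α < 1`, `γ > 0`. For each `m` there is `C > 0` such that for all integers `j ≥ 1`:
`|(1−α)^γ F_j − ∑_{k=0}^m t_k j^{−k}| ≤ C j^{−m−1}`; i.e. `(1−α)^γ F_j` admits the asymptotic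
expansion `∑_{k≥0} t_k j^{−k}` as `j → ∞`. -/
theorem asymptotic_expansion_Fj (α γ : ℝ) (hα0 : 0 < α) (hα1 : α < 1) (hγ : 0 < γ) :
    ∀ m : ℕ, ∃ C : ℝ, 0 < C ∧ ∀ j : ℕ, 1 ≤ j →
      |(1 - α) ^ γ * Fseq α γ j - ∑ k ∈ Finset.range (m+1), tcoef α γ k / (j : ℝ)^k|
        ≤ C / (j : ℝ)^(m+1) := by
  intro m
  set M : ℕ → ℝ := fun k => ∑' l : ℕ, α^l * poch γ l / l.factorial * ((l:ℝ))^k with hM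
  have hMsummable : ∀ k, Summable (fun l : ℕ => α^l * poch γ l / l.factorial * ((l:ℝ))^k) := by
    intro k
    refine summable_weight hα0 hα1 hγ k (A := 1) _ fun l => ?_
    rw [abs_of_nonneg (by positivity), one_mul]
    exact pow_le_pow_left₀ (Nat.cast_nonneg l) (by linarith) k
  have hMnonneg : ∀ k, 0 ≤ M k := fun k => tsum_nonneg fun l => by
    have hp := poch_pos hγ l
    have hfl : (0:ℝ) < l.factorial := by exact_mod_cast l.factorial_pos
    positivity
  refine ⟨(1-α)^γ * (γ^(m+1))⁻¹ * M (m+1) + 1, ?_, ?_⟩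
  · have h1α : (0:ℝ) < 1 - α := by linarith
    have : (0:ℝ) ≤ (1-α)^γ * (γ^(m+1))⁻¹ * M (m+1) := by
      have := hMnonneg (m+1)
      have h2 : (0:ℝ) < (1-α)^γ := Real.rpow_pos_of_pos h1α γ
      positivity
    linarith
  intro j hj
  have hjpos : (0:ℝ) < j := by exact_mod_cast hj
  set b : ℝ := (j:ℝ) * γ with hb
  have hbpos : 0 < b := by positivity
  have hbl : ∀ l : ℕ, (0:ℝ) < b + l := fun l => by positivity
  set a : ℕ → ℝ := fun l => α^l * poch γ l / l.factorial with ha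
  have hapos : ∀ l, 0 < a l := fun l => by
    have hp := poch_pos hγ l
    have hfl : (0:ℝ) < l.factorial := by exact_mod_cast l.factorial_pos
    positivity
  -- rewrite Fseq
  have hFseq : Fseq α γ j = ∑' l : ℕ, a l * (b/(b + l)) := by
    refine tsum_congr fun l => ?_
    rcases Nat.eq_zero_or_pos l with rfl | hl
    · simp [ha, poch_zero, div_self hbpos.ne']
    · rw [if_neg hl.ne']
  -- geometric split
  have hsplit : ∀ l : ℕ, b/(b + (l:ℝ)) = (∑ k ∈ Finset.range (m+1), (-((l:ℝ)/b))^k)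
      + (-((l:ℝ)/b))^(m+1) * (b/(b + l)) := by
    intro l
    have hG := geom_sum_mul (-((l:ℝ)/b)) (m+1)
    have h1x : (0:ℝ) < 1 + (l:ℝ)/b := by positivity
    have hq : 1 + (-((l:ℝ)/b)) * (b/(b+l)) - b/(b+l) = 0 := by
      field_simp; ring
    linear_combination (b/(b+l)) * hG - (∑ k ∈ Finset.range (m+1), (-((l:ℝ)/b))^k) * hq
  -- summabilities
  have hwk : ∀ k : ℕ, ∀ l : ℕ, |(-((l:ℝ)/b))^k| ≤ (b^k)⁻¹ * ((l:ℝ)+1)^k := by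
    intro k l
    rw [abs_pow, abs_neg, abs_of_nonneg (by positivity : (0:ℝ) ≤ (l:ℝ)/b), div_pow]
    rw [div_eq_mul_inv, mul_comm]
    exact mul_le_mul_of_nonneg_left (pow_le_pow_left₀ (Nat.cast_nonneg l) (by linarith) k)
      (by positivity)
  have hSk : ∀ k : ℕ, Summable (fun l : ℕ => a l * (-((l:ℝ)/b))^k) := fun k =>
    summable_weight hα0 hα1 hγ k _ (hwk k)
  have hRsumm : Summable (fun l : ℕ => a l * ((-((l:ℝ)/b))^(m+1) * (b/(b + l)))) := by
    refine summable_weight hα0 hα1 hγ (m+1) (A := (b^(m+1))⁻¹) _ fun l => ?_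
    rw [abs_mul]
    calc |(-((l:ℝ)/b))^(m+1)| * |b/(b+(l:ℝ))| ≤ |(-((l:ℝ)/b))^(m+1)| * 1 := by
          apply mul_le_mul_of_nonneg_left _ (abs_nonneg _)
          rw [abs_of_nonneg (le_of_lt (by positivity))]
          rw [div_le_one (hbl l)]
          linarith [Nat.cast_nonneg (α := ℝ) l]
      _ = |(-((l:ℝ)/b))^(m+1)| := mul_one _
      _ ≤ (b^(m+1))⁻¹ * ((l:ℝ)+1)^(m+1) := hwk (m+1) l
  have hG1 : Summable (fun l : ℕ => ∑ k ∈ Finset.range (m+1), a l * (-((l:ℝ)/b))^k) :=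
    summable_sum fun k _ => hSk k
  -- main tsum computation
  have hFsplit : Fseq α γ j
      = (∑ k ∈ Finset.range (m+1), ∑' l : ℕ, a l * (-((l:ℝ)/b))^k)
        + ∑' l : ℕ, a l * ((-((l:ℝ)/b))^(m+1) * (b/(b + l))) := by
    rw [hFseq]
    rw [← Summable.tsum_finsetSum (fun k _ => hSk k), ← Summable.tsum_add hG1 hRsumm]
    refine tsum_congr fun l => ?_
    conv_lhs => rw [hsplit l]
    rw [mul_add, Finset.mul_sum]
  have hterm : ∀ k : ℕ, (∑' l : ℕ, a l * (-((l:ℝ)/b))^k) = (-(1/b))^k * M k := by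
    intro k
    rw [hM, ← tsum_mul_left]
    refine tsum_congr fun l => ?_
    have : (-((l:ℝ)/b))^k = (-(1/b))^k * (l:ℝ)^k := by
      rw [← mul_pow]; congr 1; field_simp
    rw [this, ha]
    ring
  -- identify with tcoef
  have htc : ∀ k : ℕ, (1-α)^γ * ((-(1/b))^k * M k) = tcoef α γ k / (j:ℝ)^k := by
    intro k
    have hP : (1-α)^γ * M k
        = ∑ i ∈ Finset.range (k+1), (stirling2 k i : ℝ) * poch γ i * (α/(1-α))^i :=
      moment hα0 hα1 hγ k
    rw [tcoef, ← hP]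
    have hbk : b^k = (j:ℝ)^k * γ^k := by rw [hb, mul_pow]
    have h1 : (-(1/b))^k = (-1)^k * (b^k)⁻¹ := by
      rw [neg_pow, one_div, inv_pow]
    rw [h1, hbk]
    have hjk : ((j:ℝ))^k ≠ 0 := by positivity
    have hgk : (γ:ℝ)^k ≠ 0 := by positivity
    field_simp
  -- the remainder bound
  set R : ℝ := ∑' l : ℕ, a l * ((-((l:ℝ)/b))^(m+1) * (b/(b + l))) with hR
  have hRbound : |R| ≤ (b^(m+1))⁻¹ * M (m+1) := by
    have habs : ∀ l : ℕ, |a l * ((-((l:ℝ)/b))^(m+1) * (b/(b + l)))|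
        ≤ (b^(m+1))⁻¹ * (a l * ((l:ℝ))^(m+1)) := by
      intro l
      have hal := hapos l
      rw [abs_mul, abs_of_pos hal, abs_mul, abs_pow, abs_neg,
        abs_of_nonneg (by positivity : (0:ℝ) ≤ (l:ℝ)/b),
        abs_of_nonneg (le_of_lt (by positivity : (0:ℝ) < b/(b+(l:ℝ))))]
      have h2 : ((l:ℝ)/b)^(m+1) * (b/(b+(l:ℝ))) ≤ ((l:ℝ)/b)^(m+1) * 1 := by
        apply mul_le_mul_of_nonneg_left _ (by positivity)
        rw [div_le_one (hbl l)]
        linarith [Nat.cast_nonneg (α := ℝ) l]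
      calc a l * (((l:ℝ)/b)^(m+1) * (b/(b+(l:ℝ)))) ≤ a l * (((l:ℝ)/b)^(m+1) * 1) :=
            mul_le_mul_of_nonneg_left h2 hal.le
        _ = (b^(m+1))⁻¹ * (a l * ((l:ℝ))^(m+1)) := by
            rw [mul_one, div_pow]
            ring
    have h3 : |R| ≤ ∑' l : ℕ, |a l * ((-((l:ℝ)/b))^(m+1) * (b/(b + l)))| := by
      have habs' : Summable (fun l : ℕ => ‖a l * ((-((l:ℝ)/b))^(m+1) * (b/(b + l)))‖) := by
        simpa only [Real.norm_eq_abs] using hRsumm.abs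
      have h4 := norm_tsum_le_tsum_norm habs'
      simp only [Real.norm_eq_abs] at h4
      rw [hR]
      exact h4
    refine h3.trans ?_
    calc (∑' l : ℕ, |a l * ((-((l:ℝ)/b))^(m+1) * (b/(b + l)))|)
        ≤ ∑' l : ℕ, (b^(m+1))⁻¹ * (a l * ((l:ℝ))^(m+1)) :=
          Summable.tsum_le_tsum habs hRsumm.abs ((hMsummable (m+1)).mul_left _)
      _ = (b^(m+1))⁻¹ * M (m+1) := by rw [tsum_mul_left]
  -- final computation
  have hkey : (1 - α) ^ γ * Fseq α γ j - ∑ k ∈ Finset.range (m+1), tcoef α γ k / (j : ℝ)^k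
      = (1-α)^γ * R := by
    rw [hFsplit, mul_add, Finset.mul_sum]
    have : ∀ k ∈ Finset.range (m+1),
        (1-α)^γ * ∑' l : ℕ, a l * (-((l:ℝ)/b))^k = tcoef α γ k / (j:ℝ)^k := by
      intro k _
      rw [hterm k]
      exact htc k
    rw [Finset.sum_congr rfl this]
    ring
  rw [hkey]
  have h1α : (0:ℝ) < 1 - α := by linarith
  have hrp : (0:ℝ) < (1-α)^γ := Real.rpow_pos_of_pos h1α γ
  rw [abs_mul, abs_of_pos hrp]
  have hbmk : (b^(m+1))⁻¹ = (γ^(m+1))⁻¹ * ((j:ℝ)^(m+1))⁻¹ := by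
    rw [hb, mul_pow, mul_inv, mul_comm]
  calc (1-α)^γ * |R| ≤ (1-α)^γ * ((b^(m+1))⁻¹ * M (m+1)) :=
        mul_le_mul_of_nonneg_left hRbound hrp.le
    _ = ((1-α)^γ * (γ^(m+1))⁻¹ * M (m+1)) / (j:ℝ)^(m+1) := by
        rw [hbmk]; field_simp
    _ ≤ ((1-α)^γ * (γ^(m+1))⁻¹ * M (m+1) + 1) / (j:ℝ)^(m+1) := by
        gcongr
        linarith
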